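/- Let 1 ≤ n, m ≤ N. Then the maps ∇ₙ and ∇ₘ anticommute: ∇ₙ ∘ ∇ₘ = −(∇ₘ ∘ ∇ₙ) as linear maps A → A; in particular ∇ₙ ∘ ∇ₙ = 0. -/
import Mathlib


/-- Let `A` be a unital associative `ℂ`-algebra, `φ : A → A` an algebra
homomorphism with `φ ∘ φ = id`, and `D 1, …, D N ∈ A` with `φ (D n) = -D n` and the
anticommutation relations `D n * D m + D m * D n = 2 δ_{nm} 1`.  With the quantum gradients
`∇ₙ x = i (D n * x - φ x * D n)`, the maps `∇ₙ` and `∇ₘ` anticommute: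
`∇ₙ ∘ ∇ₘ = -(∇ₘ ∘ ∇ₙ)`; in particular `∇ₙ ∘ ∇ₙ = 0`. -/
theorem stmt_0 {A : Type*} [Ring A] [Algebra ℂ A]
    (φ : A →ₐ[ℂ] A) (hφ : ∀ x, φ (φ x) = x)
    {N : ℕ} (D : Fin N → A)
    (hDneg : ∀ n, φ (D n) = - D n)
    (hDanti : ∀ n m, D n * D m + D m * D n = (if n = m then (2 : ℂ) else 0) • (1 : A))
    (grad : Fin N → A →ₗ[ℂ] A)
    (hgrad : ∀ n x, grad n x = Complex.I • (D n * x - φ x * D n)) :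
    ∀ n m : Fin N,
      (∀ x, grad n (grad m x) = - grad m (grad n x)) ∧
      (∀ x, grad n (grad n x) = 0) := by
  have key : ∀ n m x, grad n (grad m x) + grad m (grad n x) = 0 := by
    intro n m x
    have hc : (D n * D m + D m * D n) * x = x * (D n * D m + D m * D n) := by
      rw [hDanti]; simp [smul_mul_assoc, mul_smul_comm]
    have expand : ∀ p q : Fin N, grad p (grad q x) =
        -(D p * (D q * x) - D p * (φ x * D q) + D q * (φ x * D p) - x * (D q * D p)) := by
      intro p q
      simp only [hgrad, map_smul, map_sub, map_mul, hDneg, hφ, neg_mul, mul_neg,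
        sub_mul, mul_sub, smul_sub, mul_smul_comm, smul_mul_assoc, mul_assoc]
      match_scalars <;> simp [Complex.I_mul_I]
    rw [expand n m, expand m n]
    have : D n * D m * x + D m * D n * x - (x * (D m * D n) + x * (D n * D m)) = 0 := by
      rw [← add_mul, ← mul_add, add_comm (D m * D n), hc, sub_self]
    linear_combination (norm := noncomm_ring) -this
  intro n m
  refine ⟨fun x => ?_, fun x => ?_⟩
  · exact eq_neg_of_add_eq_zero_left (key n m x)
  · have := key n n x
    have h2 : (2 : ℂ) • grad n (grad n x) = 0 := by
      rw [two_smul]; exact this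
    simpa using smul_eq_zero.mp h2
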